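/- Suppose d1, d2, l > 0, A0, B0 ∈ ℝ with A0 + B0 < 0, n ∈ ℕ, and r = r_n^T > 0. Then for every τ ≥ 0, λ = 0 is a root of G_n(·, r, τ), and the derivative in λ satisfies ∂G_n/∂λ(0, r, τ) = [r + (d1 + d2)*x_n − A0] − r*τ*(d1*x_n − A0 − B0); consequently, setting τ0 = [r + (d1 + d2)*x_n − A0]/[r*(d1*x_n − A0 − B0)], the root λ = 0 is simple (∂G_n/∂λ(0, r, τ) ≠ 0) if and only if τ ≠ τ0. -/

import Mathlib

/-- If `d1, d2, l > 0`, `A0 + B0 < 0` and `r = r_n^T > 0`, then for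
every `τ ≥ 0`, `λ = 0` is a root of `G_n(·, r, τ)`, the derivative in `λ`
satisfies `∂G_n/∂λ(0, r, τ) = [r + (d1+d2)x_n − A0] − r τ (d1 x_n − A0 − B0)`,
and, with `τ0 = [r + (d1+d2)x_n − A0]/[r (d1 x_n − A0 − B0)]`, the root `λ = 0`
is simple iff `τ ≠ τ0`. -/
theorem holling_tanner_zero_root_simple_iff
    (d1 d2 l A0 B0 r : ℝ) (n : ℕ) (hd1 : 0 < d1) (hd2 : 0 < d2) (hl : 0 < l)
    (hAB : A0 + B0 < 0)
    (xn : ℝ) (hxn : xn = (n:ℝ)^2 / l^2)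
    (hr : r = -(d2 * xn * (d1 * xn - A0)) / (d1 * xn - A0 - B0)) (hrpos : 0 < r)
    (τ0 : ℝ) (hτ0 : τ0 = (r + (d1 + d2) * xn - A0) / (r * (d1 * xn - A0 - B0)))
    (G : ℝ → ℂ → ℂ)
    (hG : G = fun (τ : ℝ) (lam : ℂ) =>
      lam^2 - ((((A0 - (d1 + d2) * xn : ℝ)) : ℂ)
          - (r : ℂ) * Complex.exp (-lam * (τ : ℂ))) * lam
        + (((d2 * xn * (d1 * xn - A0) : ℝ)) : ℂ)
        + (r : ℂ) * Complex.exp (-lam * (τ : ℂ))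
          * (((d1 * xn - A0 - B0 : ℝ)) : ℂ)) :
    ∀ τ : ℝ, 0 ≤ τ →
      G τ 0 = 0 ∧
      deriv (G τ) 0
        = ((((r + (d1 + d2) * xn - A0) - r * τ * (d1 * xn - A0 - B0) : ℝ)) : ℂ) ∧
      (deriv (G τ) 0 ≠ 0 ↔ τ ≠ τ0) := by
  intro τ hτ
  have hxn0 : 0 ≤ xn := by rw [hxn]; positivity
  have hQ : 0 < d1 * xn - A0 - B0 := by nlinarith [mul_nonneg hd1.le hxn0]
  have hQ0 : (d1 * xn - A0 - B0) ≠ 0 := ne_of_gt hQ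
  have hc : d2 * xn * (d1 * xn - A0) + r * (d1 * xn - A0 - B0) = 0 := by
    have := hr
    rw [eq_div_iff hQ0] at this
    linarith [this]
  -- root at 0
  have hroot : G τ 0 = 0 := by
    have h0 : ((d2 * xn * (d1 * xn - A0) : ℝ) : ℂ)
        + (r : ℂ) * ((d1 * xn - A0 - B0 : ℝ) : ℂ) = 0 := by
      rw [← Complex.ofReal_mul, ← Complex.ofReal_add, hc, Complex.ofReal_zero]
    simp only [hG]
    simpa [Complex.exp_zero] using h0
  -- derivative
  have hexp : HasDerivAt (fun lam : ℂ => Complex.exp (-lam * (τ:ℂ))) (-(τ:ℂ)) 0 := by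
    have := ((hasDerivAt_id (0:ℂ)).neg.mul_const (τ:ℂ)).cexp
    simpa using this
  have hsq : HasDerivAt (fun lam : ℂ => lam ^ 2) 0 0 := by
    simpa using hasDerivAt_pow 2 (0:ℂ)
  have h1 : HasDerivAt (fun lam : ℂ =>
      (((A0 - (d1 + d2) * xn : ℝ) : ℂ) - (r:ℂ) * Complex.exp (-lam * (τ:ℂ))) * lam)
      ((0 - (r:ℂ) * (-(τ:ℂ))) * 0
        + (((A0 - (d1 + d2) * xn : ℝ) : ℂ) - (r:ℂ) * Complex.exp (-(0:ℂ) * (τ:ℂ))) * 1) 0 := by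
    exact ((hasDerivAt_const (0:ℂ) (((A0 - (d1 + d2) * xn : ℝ) : ℂ))).sub
      (hexp.const_mul (r:ℂ))).mul (hasDerivAt_id (0:ℂ))
  have h2 : HasDerivAt (fun lam : ℂ =>
      (r:ℂ) * Complex.exp (-lam * (τ:ℂ)) * ((d1 * xn - A0 - B0 : ℝ) : ℂ))
      ((r:ℂ) * (-(τ:ℂ)) * ((d1 * xn - A0 - B0 : ℝ) : ℂ)) 0 :=
    (hexp.const_mul (r:ℂ)).mul_const _
  have hD : HasDerivAt (G τ)
      (0 - ((0 - (r:ℂ) * (-(τ:ℂ))) * 0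
        + (((A0 - (d1 + d2) * xn : ℝ) : ℂ) - (r:ℂ) * Complex.exp (-(0:ℂ) * (τ:ℂ))) * 1)
        + ((r:ℂ) * (-(τ:ℂ)) * ((d1 * xn - A0 - B0 : ℝ) : ℂ))) 0 := by
    rw [hG]
    beta_reduce
    exact (((hsq.sub h1).add_const _).add h2)
  have hDval : deriv (G τ) 0
      = ((((r + (d1 + d2) * xn - A0) - r * τ * (d1 * xn - A0 - B0) : ℝ)) : ℂ) := by
    rw [hD.deriv]
    simp [Complex.exp_zero]
    push_cast
    ring
  refine ⟨hroot, hDval, ?_⟩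
  have hrQ : r * (d1 * xn - A0 - B0) ≠ 0 := mul_ne_zero (ne_of_gt hrpos) hQ0
  have key : ((r + (d1 + d2) * xn - A0) - r * τ * (d1 * xn - A0 - B0) = 0) ↔ τ = τ0 := by
    rw [hτ0, eq_div_iff hrQ]
    constructor <;> intro h <;> linear_combination -h
  rw [hDval]
  rw [ne_eq, Complex.ofReal_eq_zero]
  exact not_congr key
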